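/- Let α > 0 with α ≠ 1. If u : ℚ ∩ [0,1] → ℝ satisfies u(1-x) + (1-x)^α · u(y/(1-x)) = u(y) + (1-y)^α · u((1-x-y)/(1-y)) for all rational x, y ∈ [0,1) with x + y ≤ 1, then there exists a real constant λ such that u(x) = λ · (1/(1-α)) · (x^α + (1-x)^α - 1) for every rational x ∈ [0,1]. -/

import Mathlib

/-- For `0 < α`, `α ≠ 1`, any `u : ℚ ∩ [0,1] → ℝ` satisfying the fundamental
functional equation at rational arguments is a multiple of `s_α` at every rational of `[0,1]`. -/
theorem stmt5 (α : ℝ) (hα : 0 < α) (hα1 : α ≠ 1) (u : ℚ → ℝ)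
    (heq : ∀ x y : ℚ, 0 ≤ x → x < 1 → 0 ≤ y → y < 1 → x + y ≤ 1 →
      u (1 - x) + (1 - (x : ℝ)) ^ α * u (y / (1 - x))
        = u y + (1 - (y : ℝ)) ^ α * u ((1 - x - y) / (1 - y))) :
    ∃ lam : ℝ, ∀ q : ℚ, 0 ≤ q → q ≤ 1 →
      u q = lam * ((1 / (1 - α)) * ((q : ℝ) ^ α + (1 - (q : ℝ)) ^ α - 1)) := by
  have hhalf : ((1:ℝ)/2) ^ α < 1 := by
    apply Real.rpow_lt_one (by norm_num) (by norm_num) hα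
  have h0 : u 0 = 0 := by
    have h := heq (1/2) 0 (by norm_num) (by norm_num) le_rfl (by norm_num) (by norm_num)
    norm_num at h
    nlinarith [h]
  have h1 : u 1 = 0 := by
    have h := heq 0 (1/2) le_rfl (by norm_num) (by norm_num) (by norm_num) (by norm_num)
    norm_num at h
    nlinarith [h]
  -- the fundamental equation in "associativity" form, with all arguments made explicit
  have E3' : ∀ a b c s t r1 r2 : ℚ, a + b + c = 1 → a + b = s → b + c = t →
      a / s = r1 → b / t = r2 → 0 ≤ a → 0 ≤ b → 0 ≤ c → a < 1 → c < 1 →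
      u s + (s : ℝ) ^ α * u r1 = u a + (t : ℝ) ^ α * u r2 := by
    intro a b c s t r1 r2 habc habs hbct hr1 hr2 ha hb hc ha1 hc1
    have h := heq c a hc hc1 ha ha1 (by linarith)
    have e1 : (1:ℚ) - c = s := by linarith
    have e2 : s - a = b := by linarith
    have e3 : (1:ℚ) - a = t := by linarith
    rw [e1] at h
    rw [e2] at h
    rw [e3] at h
    rw [hr1, hr2] at h
    have f1 : (1:ℝ) - (c:ℚ) = (s:ℚ) := by exact_mod_cast congrArg (fun z : ℚ => (z:ℝ)) e1
    have f3 : (1:ℝ) - (a:ℚ) = (t:ℚ) := by exact_mod_cast congrArg (fun z : ℚ => (z:ℝ)) e3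
    rw [f1, f3] at h
    exact h
  -- six instances give the "symmetric sum" identity
  have hsum : ∀ a b : ℚ, 0 ≤ a → a < 1 → 0 ≤ b → b < 1 → 0 < a + b → a + b ≤ 1 →
      u (a+b) + u (1-a) + u (1-b) = u a + u b + u (1-a-b) := by
    intro a b ha ha1 hb hb1 hab0 hab1
    have i1 := E3' a b (1-a-b) (a+b) (1-a) (a/(a+b)) (b/(1-a))
      (by ring) rfl (by ring) rfl rfl ha hb (by linarith) ha1 (by linarith)
    have i2 := E3' b a (1-a-b) (a+b) (1-b) (b/(a+b)) (a/(1-b))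
      (by ring) (by ring) (by ring) rfl rfl hb ha (by linarith) hb1 (by linarith)
    have i3 := E3' a (1-a-b) b (1-b) (1-a) (a/(1-b)) ((1-a-b)/(1-a))
      (by ring) (by ring) (by ring) rfl rfl ha (by linarith) hb ha1 hb1
    have i4 := E3' (1-a-b) a b (1-b) (a+b) ((1-a-b)/(1-b)) (a/(a+b))
      (by ring) (by ring) (by ring) rfl rfl (by linarith) ha hb (by linarith) hb1
    have i5 := E3' b (1-a-b) a (1-a) (1-b) (b/(1-a)) ((1-a-b)/(1-b))
      (by ring) (by ring) (by ring) rfl rfl hb (by linarith) ha hb1 ha1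
    have i6 := E3' (1-a-b) b a (1-a) (a+b) ((1-a-b)/(1-a)) (b/(a+b))
      (by ring) (by ring) (by ring) rfl rfl (by linarith) hb ha (by linarith) ha1
    linarith [i1, i2, i3, i4, i5, i6]
  -- additivity of q ↦ u q - u (1-q)
  have hGadd : ∀ a b : ℚ, 0 ≤ a → a < 1 → 0 ≤ b → b < 1 → 0 < a + b → a + b ≤ 1 →
      u (a+b) - u (1-(a+b)) = (u a - u (1-a)) + (u b - u (1-b)) := by
    intro a b ha ha1 hb hb1 hab0 hab1
    have h := hsum a b ha ha1 hb hb1 hab0 hab1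
    rw [show (1:ℚ) - (a+b) = 1-a-b from by ring]
    linarith
  -- symmetry
  have hsym : ∀ q : ℚ, 0 ≤ q → q ≤ 1 → u q = u (1-q) := by
    intro q hq0 hq1
    rcases eq_or_lt_of_le hq0 with h|hq0'
    · rw [← h]; norm_num [h0, h1]
    rcases eq_or_lt_of_le hq1 with h|hq1'
    · rw [h]; norm_num [h0, h1]
    set n := q.den with hn
    have hden : 2 ≤ n := by
      by_contra hcon
      push_neg at hcon
      have hpos := q.pos
      have hn1 : n = 1 := by omega
      have : (q.num : ℚ) = q := by
        conv_rhs => rw [← Rat.num_div_den q]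
        rw [← hn, hn1]; norm_num
      rw [← this] at hq0' hq1'
      have e0 : (0:ℤ) < q.num := by exact_mod_cast hq0'
      have e1 : q.num < 1 := by exact_mod_cast hq1'
      omega
    have hn0 : (0:ℚ) < (n:ℚ) := by positivity
    have claim : ∀ j : ℕ, j ≤ n → u ((j:ℚ)/(n:ℚ)) - u (1 - (j:ℚ)/(n:ℚ)) =
        (j:ℝ) * (u ((1:ℚ)/(n:ℚ)) - u (1 - (1:ℚ)/(n:ℚ))) := by
      intro j
      induction j with
      | zero => intro _; norm_num [h0, h1]
      | succ j ih =>
        intro hj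
        have hjn : (j:ℚ)/(n:ℚ) < 1 := by
          rw [div_lt_one hn0]; exact_mod_cast by omega
        have h1n : (1:ℚ)/(n:ℚ) < 1 := by
          rw [div_lt_one hn0]; exact_mod_cast by omega
        have hle1 : (j:ℚ)/(n:ℚ) + 1/(n:ℚ) ≤ 1 := by
          rw [← add_div, div_le_one hn0]; exact_mod_cast hj
        have hstep := hGadd ((j:ℚ)/n) (1/n) (by positivity) hjn (by positivity) h1n
          (by positivity) hle1
        rw [← add_div] at hstep
        rw [show ((j:ℚ)+1) = ((j+1 : ℕ) : ℚ) from by push_cast; ring] at hstep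
        rw [hstep]
        push_cast
        linarith [ih (by omega)]
    have hfin := claim n le_rfl
    rw [div_self (ne_of_gt hn0)] at hfin
    norm_num [h0, h1] at hfin
    have hG1 : u ((1:ℚ)/(n:ℚ)) - u (1 - (1:ℚ)/(n:ℚ)) = 0 := by
      rcases hfin with h|h
      · omega
      · simpa [one_div] using h
    have hnum0 : (0:ℤ) ≤ q.num := Rat.num_nonneg.mpr hq0
    have hnumden : q.num ≤ (n : ℤ) := by
      have hd : (q.num : ℚ) ≤ (n:ℚ) := by
        have := (div_le_one hn0).mp (by rw [hn, Rat.num_div_den]; exact hq1)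
        exact this
      exact_mod_cast hd
    have hknum : q.num.toNat ≤ n := by omega
    have hq : ((q.num.toNat : ℚ))/(n:ℚ) = q := by
      rw [show ((q.num.toNat : ℕ) : ℚ) = ((q.num : ℤ) : ℚ) from by
        exact_mod_cast congrArg (fun z : ℤ => (z:ℚ)) (Int.toNat_of_nonneg hnum0)]
      rw [hn]; exact Rat.num_div_den q
    have hfin2 := claim q.num.toNat hknum
    rw [hq, hG1, mul_zero] at hfin2
    linarith
  -- the key rigidity identity
  have hkey : ∀ x y : ℚ, 0 < x → x < 1 → 0 < y → y < 1 →
      u x * ((y:ℝ)^α + (1-(y:ℝ))^α - 1) = u y * ((x:ℝ)^α + (1-(x:ℝ))^α - 1) := by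
    intro x y hx0 hx1 hy0 hy1
    have hM : (0:ℚ) < 1 - x*y := by nlinarith
    have hS : (0:ℚ) < x + y - 2*(x*y) := by nlinarith
    have hMne := hM.ne'
    have hSne := hS.ne'
    have hxc : (0:ℚ) ≤ 1 - x := by linarith
    have hyc : (0:ℚ) ≤ 1 - y := by linarith
    have hx1c : (0:ℚ) < 1 - x := by linarith
    have hy1c : (0:ℚ) < 1 - y := by linarith
    have iI := E3' (x*y) (x*(1-y)) (1-x) x (1-x*y) y (x*(1-y)/(1-x*y))
      (by ring) (by ring) (by ring) (by field_simp [hx0.ne']) rfl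
      (by positivity) (mul_nonneg hx0.le hyc) hxc (by nlinarith) (by linarith)
    have iI' := E3' (x*y) ((1-x)*y) (1-y) y (1-x*y) x ((1-x)*y/(1-x*y))
      (by ring) (by ring) (by ring) (by field_simp [hy0.ne']) rfl
      (by positivity) (mul_nonneg hxc hy0.le) hyc (by nlinarith) (by linarith)
    have j1 := E3' (x*(1-y)/(1-x*y)) ((1-x)*y/(1-x*y)) ((1-x)*(1-y)/(1-x*y))
      ((x+y-2*(x*y))/(1-x*y)) ((1-x)/(1-x*y)) (x*(1-y)/(x+y-2*(x*y))) y
      (by field_simp; ring) (by field_simp; ring) (by field_simp; ring)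
      (by field_simp [hMne, hSne, hx1c.ne', hy1c.ne']; try ring)
      (by field_simp [hMne, hSne, hx1c.ne', hy1c.ne']; try ring)
      (div_nonneg (mul_nonneg hx0.le hyc) hM.le)
      (div_nonneg (mul_nonneg hxc hy0.le) hM.le)
      (div_nonneg (mul_nonneg hxc hyc) hM.le)
      (by rw [div_lt_one hM]; nlinarith) (by rw [div_lt_one hM]; nlinarith)
    have j2 := E3' ((1-x)*y/(1-x*y)) (x*(1-y)/(1-x*y)) ((1-x)*(1-y)/(1-x*y))
      ((x+y-2*(x*y))/(1-x*y)) ((1-y)/(1-x*y)) ((1-x)*y/(x+y-2*(x*y))) x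
      (by field_simp; ring) (by field_simp; ring) (by field_simp; ring)
      (by field_simp [hMne, hSne, hx1c.ne', hy1c.ne']; try ring)
      (by field_simp [hMne, hSne, hx1c.ne', hy1c.ne']; try ring)
      (div_nonneg (mul_nonneg hxc hy0.le) hM.le)
      (div_nonneg (mul_nonneg hx0.le hyc) hM.le)
      (div_nonneg (mul_nonneg hxc hyc) hM.le)
      (by rw [div_lt_one hM]; nlinarith) (by rw [div_lt_one hM]; nlinarith)
    have hw : u (x*(1-y)/(x+y-2*(x*y))) = u ((1-x)*y/(x+y-2*(x*y))) := by
      rw [hsym (x*(1-y)/(x+y-2*(x*y))) (div_nonneg (mul_nonneg hx0.le hyc) hS.le)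
        (by rw [div_le_one hS]; nlinarith)]
      congr 1
      rw [eq_div_iff hSne, sub_mul, div_mul_cancel₀ _ hSne]
      ring
    rw [hw] at j1
    have hd : u (x*(1-y)/(1-x*y)) - u ((1-x)*y/(1-x*y))
        = (((1-y)/(1-x*y) : ℚ) : ℝ)^α * u x - (((1-x)/(1-x*y) : ℚ) : ℝ)^α * u y := by
      linarith [j1, j2]
    have hMR : (0:ℝ) < 1 - (x:ℝ)*(y:ℝ) := by exact_mod_cast hM
    have hA : ((1 - x*y : ℚ) : ℝ)^α * (((1-y)/(1-x*y) : ℚ) : ℝ)^α = (1-(y:ℝ))^α := by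
      rw [← Real.mul_rpow (by exact_mod_cast hM.le)
        (by exact_mod_cast div_nonneg hyc hM.le)]
      congr 1
      push_cast
      field_simp
    have hB : ((1 - x*y : ℚ) : ℝ)^α * (((1-x)/(1-x*y) : ℚ) : ℝ)^α = (1-(x:ℝ))^α := by
      rw [← Real.mul_rpow (by exact_mod_cast hM.le)
        (by exact_mod_cast div_nonneg hxc hM.le)]
      congr 1
      push_cast
      field_simp
    have hd2 : ((1 - x*y : ℚ) : ℝ)^α * (u (x*(1-y)/(1-x*y)) - u ((1-x)*y/(1-x*y)))
        = (1-(y:ℝ))^α * u x - (1-(x:ℝ))^α * u y := by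
      linear_combination ((1 - x*y : ℚ) : ℝ)^α * hd + u x * hA - u y * hB
    linear_combination (-1:ℝ) * iI + iI' - hd2
  -- conclusion
  have hDne : 2*((1:ℝ)/2)^α - 1 ≠ 0 := by
    rcases lt_or_gt_of_ne hα1 with h|h
    · have hlt := Real.rpow_lt_rpow_of_exponent_gt (x := (1:ℝ)/2) (by norm_num) (by norm_num) h
      rw [Real.rpow_one] at hlt
      intro hc; nlinarith
    · have hlt := Real.rpow_lt_rpow_of_exponent_gt (x := (1:ℝ)/2) (by norm_num) (by norm_num) h
      rw [Real.rpow_one] at hlt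
      intro hc; nlinarith
  have hαne : (1:ℝ) - α ≠ 0 := by
    intro h; apply hα1; linarith
  refine ⟨(1-α) * u (1/2) / (2*((1:ℝ)/2)^α - 1), ?_⟩
  intro q hq0 hq1
  rcases eq_or_lt_of_le hq0 with h|hq0'
  · rw [← h]
    norm_num [h0, Real.zero_rpow hα.ne', Real.one_rpow]
  rcases eq_or_lt_of_le hq1 with h|hq1'
  · rw [h]
    norm_num [h1, Real.zero_rpow hα.ne', Real.one_rpow]
  have hk := hkey q (1/2) hq0' hq1' (by norm_num) (by norm_num)
  have h2 : ((1/2 : ℚ) : ℝ) = (1:ℝ)/2 := by norm_num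
  rw [h2] at hk
  rw [show (1:ℝ) - 1/2 = 1/2 from by norm_num] at hk
  rw [show ((1:ℝ)/2)^α + ((1:ℝ)/2)^α - 1 = 2*((1:ℝ)/2)^α - 1 from by ring] at hk
  have hgoal : ((1:ℝ)-α) * u (1/2) / (2*((1:ℝ)/2)^α - 1) *
      (1/(1-α) * ((q:ℝ)^α + (1-(q:ℝ))^α - 1))
      = u (1/2) * ((q:ℝ)^α + (1-(q:ℝ))^α - 1) / (2*((1:ℝ)/2)^α - 1) := by
    field_simp
  rw [hgoal, eq_div_iff hDne]
  linear_combination hk
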